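/- Let α, β ≥ 0 be real numbers, n ≥ 0 an integer, and p a monic real polynomial of degree n. Set M = sup_{t ∈ [0,1]} t^α (1−t)^β |p(t)|. If there exist n+1 points 0 ≤ η_0 < η_1 < ... < η_n ≤ 1 such that η_k^α (1−η_k)^β p(η_k) = (−1)^{n−k} M for every k = 0, 1, ..., n, then p is a polynomial of least weighted deviation from zero, i.e. M = E_n(α,β): every monic real polynomial q of degree n satisfies sup_{t ∈ [0,1]} t^α (1−t)^β |q(t)| ≥ M. -/

import Mathlib

/-- The weighted sup norm `sup_{t ∈ [0,1]} t^α (1-t)^β |p(t)|` (real `rpow`, so `0^0 = 1`). -/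
noncomputable def intervalSup (a b : ℝ) (p : Polynomial ℝ) : ℝ :=
  sSup ((fun t : ℝ => t ^ a * (1 - t) ^ b * |p.eval t|) '' Set.Icc (0 : ℝ) 1)

/-- The 1-D weighted Chebyshev constant `E_m(α,β)`: infimum over monic real polynomials of
degree `m` of `sup_{t ∈ [0,1]} t^α (1-t)^β |p(t)|`. -/
noncomputable def devE (m : ℕ) (a b : ℝ) : ℝ :=
  sInf {r : ℝ | ∃ p : Polynomial ℝ, p.Monic ∧ p.natDegree = m ∧ r = intervalSup a b p}

lemma weight_continuous (a b : ℝ) (ha : 0 ≤ a) (hb : 0 ≤ b) (p : Polynomial ℝ) :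
    Continuous (fun t : ℝ => t ^ a * (1 - t) ^ b * |p.eval t|) := by
  have h1 : Continuous (fun t : ℝ => t ^ a) :=
    continuous_iff_continuousAt.2 fun x => Real.continuousAt_rpow_const x a (Or.inr ha)
  have h2 : Continuous (fun t : ℝ => (1 - t) ^ b) :=
    (continuous_iff_continuousAt.2 fun x => Real.continuousAt_rpow_const x b (Or.inr hb)).comp
      (continuous_const.sub continuous_id)
  exact (h1.mul h2).mul p.continuous.abs

lemma le_intervalSup (a b : ℝ) (ha : 0 ≤ a) (hb : 0 ≤ b) (p : Polynomial ℝ) {t : ℝ}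
    (ht : t ∈ Set.Icc (0:ℝ) 1) :
    t ^ a * (1 - t) ^ b * |p.eval t| ≤ intervalSup a b p := by
  apply le_csSup
  · exact (isCompact_Icc.image (weight_continuous a b ha hb p)).bddAbove
  · exact Set.mem_image_of_mem _ ht

lemma sign_changes_natDegree_ge (r : Polynomial ℝ) (n : ℕ) (x : Fin (n + 1) → ℝ)
    (hx : StrictMono x)
    (hsign : ∀ k : Fin (n + 1), 0 < (-1 : ℝ) ^ (n - (k : ℕ)) * r.eval (x k)) :
    r ≠ 0 ∧ n ≤ r.natDegree := by
  have hr0 : r ≠ 0 := by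
    intro h
    have := hsign 0
    rw [h] at this
    simp at this
  refine ⟨hr0, ?_⟩
  have key : ∀ k : Fin n, ∃ z ∈ Set.Ioo (x k.castSucc) (x k.succ), r.eval z = 0 := by
    intro k
    have h1 := hsign k.castSucc
    have h2 := hsign k.succ
    have hc : ((k.castSucc : Fin (n+1)) : ℕ) = (k : ℕ) := rfl
    have hs : ((k.succ : Fin (n+1)) : ℕ) = (k : ℕ) + 1 := rfl
    rw [hc] at h1
    rw [hs] at h2
    have hkn : (k : ℕ) < n := k.isLt
    have hmk : n - (k : ℕ) = (n - ((k : ℕ) + 1)) + 1 := by omega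
    rw [hmk, pow_succ] at h1
    set m := n - ((k:ℕ)+1) with hm
    have hle : x k.castSucc ≤ x k.succ := (hx (Fin.castSucc_lt_succ (i := k))).le
    have hcont : ContinuousOn (fun t => r.eval t) (Set.Icc (x k.castSucc) (x k.succ)) :=
      r.continuous.continuousOn
    rcases neg_one_pow_eq_or ℝ m with hpar | hpar <;> rw [hpar] at h1 h2
    · have ha' : r.eval (x k.castSucc) < 0 := by nlinarith
      have hb' : 0 < r.eval (x k.succ) := by nlinarith
      have : (0:ℝ) ∈ Set.Ioo (r.eval (x k.castSucc)) (r.eval (x k.succ)) := ⟨ha', hb'⟩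
      obtain ⟨z, hz, hz0⟩ := intermediate_value_Ioo hle hcont this
      exact ⟨z, hz, hz0⟩
    · have ha' : 0 < r.eval (x k.castSucc) := by nlinarith
      have hb' : r.eval (x k.succ) < 0 := by nlinarith
      have : (0:ℝ) ∈ Set.Ioo (r.eval (x k.succ)) (r.eval (x k.castSucc)) := ⟨hb', ha'⟩
      obtain ⟨z, hz, hz0⟩ := intermediate_value_Ioo' hle hcont this
      exact ⟨z, hz, hz0⟩
  choose z hz hz0 using key
  have hzmono : StrictMono z := by
    intro k l hkl
    calc z k < x k.succ := (hz k).2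
      _ ≤ x l.castSucc := hx.monotone (by
          simp only [Fin.le_def, Fin.coe_castSucc, Fin.val_succ]
          have : (k : ℕ) < (l : ℕ) := hkl
          omega)
      _ < z l := (hz l).1
  have hsub : Finset.univ.image z ⊆ r.roots.toFinset := by
    intro y hy
    simp only [Finset.mem_image] at hy
    obtain ⟨k, -, rfl⟩ := hy
    simp [Polynomial.mem_roots', hr0, Polynomial.IsRoot, hz0 k]
  calc n = (Finset.univ.image z).card := by
        rw [Finset.card_image_of_injective _ hzmono.injective, Finset.card_univ,
          Fintype.card_fin]
    _ ≤ r.roots.toFinset.card := Finset.card_le_card hsub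
    _ ≤ Multiset.card r.roots := r.roots.toFinset_card_le
    _ ≤ r.natDegree := r.card_roots'

/-- a monic polynomial of degree `n` whose weighted extremal function
equioscillates between `±M` (where `M` is its weighted sup norm) at `n+1` points of `[0,1]` is a
polynomial of least weighted deviation: `M = E_n(α,β)` and every monic `q` of degree `n` has
weighted sup norm at least `M`. -/
theorem equioscillation_implies_extremal (a b : ℝ) (ha : 0 ≤ a) (hb : 0 ≤ b) (n : ℕ)
    (p : Polynomial ℝ) (hp : p.Monic) (hdeg : p.natDegree = n)
    (η : Fin (n + 1) → ℝ) (hmono : StrictMono η) (hmem : ∀ k, η k ∈ Set.Icc (0 : ℝ) 1)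
    (halt : ∀ k : Fin (n + 1),
      η k ^ a * (1 - η k) ^ b * p.eval (η k) = (-1 : ℝ) ^ (n - (k : ℕ)) * intervalSup a b p) :
    intervalSup a b p = devE n a b ∧
    ∀ q : Polynomial ℝ, q.Monic → q.natDegree = n →
      intervalSup a b p ≤ intervalSup a b q := by
  have main : ∀ q : Polynomial ℝ, q.Monic → q.natDegree = n →
      intervalSup a b p ≤ intervalSup a b q := by
    intro q hq hqdeg
    by_contra hlt
    push_neg at hlt
    set M := intervalSup a b p with hM
    set S := intervalSup a b q with hS
    set r := p - q with hr
    have hsign : ∀ k : Fin (n+1), 0 < (-1:ℝ)^(n - (k:ℕ)) * r.eval (η k) := by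
      intro k
      obtain ⟨h0, h1⟩ := hmem k
      set c : ℝ := (-1:ℝ)^(n - (k:ℕ)) with hcdef
      set w : ℝ := η k ^ a * (1 - η k) ^ b with hwdef
      have hw : 0 ≤ w :=
        mul_nonneg (Real.rpow_nonneg h0 a) (Real.rpow_nonneg (by linarith) b)
      have hqle : w * |q.eval (η k)| ≤ S := le_intervalSup a b ha hb q (hmem k)
      have hpk : w * p.eval (η k) = c * M := halt k
      have hcc : c * c = 1 := by
        rw [hcdef, ← pow_add]
        exact (neg_one_pow_eq_one_iff_even (by norm_num)).2 ⟨n - (k:ℕ), by ring⟩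
      have hcabs : |c| = 1 := by
        rcases neg_one_pow_eq_or ℝ (n - (k:ℕ)) with h | h <;> rw [hcdef, h] <;> norm_num
      have hevalr : r.eval (η k) = p.eval (η k) - q.eval (η k) := by
        simp [hr]
      have hcwq : c * (w * q.eval (η k)) ≤ S := by
        calc c * (w * q.eval (η k)) ≤ |c * (w * q.eval (η k))| := le_abs_self _
          _ = |c| * (|w| * |q.eval (η k)|) := by rw [abs_mul, abs_mul]
          _ = w * |q.eval (η k)| := by rw [hcabs, abs_of_nonneg hw]; ring
          _ ≤ S := hqle
      have hkey : 0 < c * (w * r.eval (η k)) := by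
        have heq : c * (w * r.eval (η k)) = c * (w * p.eval (η k)) - c * (w * q.eval (η k)) := by
          rw [hevalr]; ring
        rw [heq, hpk, ← mul_assoc, hcc, one_mul]
        linarith
      by_contra hcon
      push_neg at hcon
      have : w * (c * r.eval (η k)) ≤ 0 := mul_nonpos_of_nonneg_of_nonpos hw hcon
      nlinarith
    obtain ⟨hr0, hge⟩ := sign_changes_natDegree_ge r n η hmono hsign
    have hdlt : r.degree < p.degree := by
      apply Polynomial.degree_sub_lt
      · rw [Polynomial.degree_eq_natDegree hp.ne_zero,
          Polynomial.degree_eq_natDegree hq.ne_zero, hdeg, hqdeg]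
      · exact hp.ne_zero
      · rw [hp.leadingCoeff, hq.leadingCoeff]
    have : r.natDegree < n := by
      rw [← hdeg]
      exact Polynomial.natDegree_lt_natDegree hr0 hdlt
    omega
  refine ⟨le_antisymm ?_ ?_, main⟩
  · apply le_csInf
    · exact ⟨intervalSup a b p, p, hp, hdeg, rfl⟩
    · rintro x ⟨q, hq, hqd, rfl⟩
      exact main q hq hqd
  · apply csInf_le
    · exact ⟨intervalSup a b p, by rintro x ⟨q, hq, hqd, rfl⟩; exact main q hq hqd⟩
    · exact ⟨p, hp, hdeg, rfl⟩
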